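/- arXiv:2110.07530 — 2 statements merged into one kernel-verified Lean document; each statement's English description precedes it below -/
import Mathlib

section
/- Let a, b ∈ ℝ, r ≥ 2 and k ≥ 0. Let T_k : ℝ → [−k,k] be the truncation T_k(t) = −k for t ≤ −k, T_k(t) = t for t ∈ (−k,k), T_k(t) = k for t ≥ k, and write a_k := T_k(a), b_k := T_k(b). Then (4(r−1)/r²)·(|a_k|^{r/2} − |b_k|^{r/2})² ≤ (a−b)·(a_k|a_k|^{r−2} − b_k|b_k|^{r−2}). -/
open MeasureTheory Filter Topology

noncomputable section

/-- Euclidean space ℝ^N. -/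
abbrev RN (N : ℕ) : Type := EuclideanSpace ℝ (Fin N)

/-- The squared Gagliardo seminorm [u]_s². -/
def gagliardoSq (N : ℕ) (s : ℝ) (u : RN N → ℝ) : ℝ :=
  ∫ x : RN N, ∫ y : RN N, (u x - u y) ^ 2 / dist x y ^ ((N : ℝ) + 2 * s)

/-- Membership in the fractional Sobolev space H^s(ℝ^N):
u ∈ L² and the Gagliardo integrand is integrable (i.e. [u]_s < ∞). -/
def memHs (N : ℕ) (s : ℝ) (u : RN N → ℝ) : Prop :=
  MemLp u 2 (volume : Measure (RN N)) ∧
    Integrable (fun p : RN N × RN N =>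
      (u p.1 - u p.2) ^ 2 / dist p.1 p.2 ^ ((N : ℝ) + 2 * s))
      ((volume : Measure (RN N)).prod volume)

/-- The fractional Dirichlet form E(u,φ) with normalizing constant CNs = C(N,s). -/
def dForm (N : ℕ) (s CNs : ℝ) (u φ : RN N → ℝ) : ℝ :=
  CNs * ∫ x : RN N, ∫ y : RN N,
    (u x - u y) * (φ x - φ y) / dist x y ^ ((N : ℝ) + 2 * s)

/-- The constant A_{N,α} of the Riesz potential. -/
def rieszConst (N : ℕ) (α : ℝ) : ℝ :=
  Real.Gamma (((N : ℝ) - α) / 2) /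
    ((2 : ℝ) ^ α * Real.pi ^ ((N : ℝ) / 2) * Real.Gamma (α / 2))

/-- The Riesz potential (I_α ∗ g)(x). -/
def riesz (N : ℕ) (α : ℝ) (g : RN N → ℝ) (x : RN N) : ℝ :=
  rieszConst N α * ∫ y : RN N, g y * dist x y ^ (α - (N : ℝ))

/-- F(t) := ∫₀ᵗ f(τ) dτ. -/
def primitive (f : ℝ → ℝ) (t : ℝ) : ℝ := ∫ τ in (0:ℝ)..t, f τ

/-- Radially symmetric function on ℝ^N. -/
def radialFn (N : ℕ) (u : RN N → ℝ) : Prop :=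
  ∀ x y : RN N, ‖x‖ = ‖y‖ → u x = u y

/-- (f1): f is continuous. -/
def Cond1 (f : ℝ → ℝ) : Prop := Continuous f

/-- (f2): limsup_{t→0} |t f(t)|/|t|^{(N+α)/N} < ∞ and
limsup_{|t|→∞} |t f(t)|/|t|^{(N+α)/(N-2s)} < ∞. -/
def Cond2 (N : ℕ) (s α : ℝ) (f : ℝ → ℝ) : Prop :=
  (∃ C : ℝ, ∀ᶠ t : ℝ in 𝓝[≠] 0, |t * f t| ≤ C * |t| ^ (((N : ℝ) + α) / N)) ∧
  (∃ C M : ℝ, ∀ t : ℝ, M ≤ |t| → |t * f t| ≤ C * |t| ^ (((N : ℝ) + α) / ((N : ℝ) - 2 * s)))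

/-- (f3): lim_{t→0} F(t)/|t|^{(N+α)/N} = 0 and lim_{|t|→∞} F(t)/|t|^{(N+α)/(N-2s)} = 0. -/
def Cond3 (N : ℕ) (s α : ℝ) (f : ℝ → ℝ) : Prop :=
  Tendsto (fun t : ℝ => primitive f t / |t| ^ (((N : ℝ) + α) / N)) (𝓝[≠] 0) (𝓝 0) ∧
  Tendsto (fun t : ℝ => primitive f t / |t| ^ (((N : ℝ) + α) / ((N : ℝ) - 2 * s)))
    (atBot ⊔ atTop) (𝓝 0)

/-- (f4): there is t₀ ≠ 0 with F(t₀) ≠ 0. -/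
def Cond4 (f : ℝ → ℝ) : Prop := ∃ t₀ : ℝ, t₀ ≠ 0 ∧ primitive f t₀ ≠ 0

/-- (f5): limsup_{t→0} |t f(t)|/t² < ∞. -/
def Cond5 (f : ℝ → ℝ) : Prop := ∃ C : ℝ, ∀ᶠ t : ℝ in 𝓝[≠] (0:ℝ), |t * f t| ≤ C * t ^ 2

/-- u is a weak solution of (−Δ)^s u + μ u = (I_α∗F(u)) f(u), tested against all of H^s. -/
def weakSol (N : ℕ) (s CNs α μ : ℝ) (f : ℝ → ℝ) (u : RN N → ℝ) : Prop :=
  ∀ φ : RN N → ℝ, memHs N s φ →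
    dForm N s CNs u φ + μ * ∫ x : RN N, u x * φ x =
      ∫ x : RN N, riesz N α (fun y => primitive f (u y)) x * f (u x) * φ x
/-- The nonlocal term D(u) = ∫ (I_α∗F(u)) F(u). -/
def Dnl (N : ℕ) (α : ℝ) (f : ℝ → ℝ) (u : RN N → ℝ) : ℝ :=
  ∫ x : RN N, riesz N α (fun y => primitive f (u y)) x * primitive f (u x)

/-- The action functional J_μ. -/
def Jfun (N : ℕ) (s CNs α μ : ℝ) (f : ℝ → ℝ) (u : RN N → ℝ) : ℝ :=
  CNs / 2 * gagliardoSq N s u + μ / 2 * (∫ x : RN N, (u x) ^ 2) - Dnl N α f u / 2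

/-- The Pohozaev functional P_μ. -/
def Pfun (N : ℕ) (s CNs α μ : ℝ) (f : ℝ → ℝ) (u : RN N → ℝ) : ℝ :=
  ((N : ℝ) - 2 * s) / 2 * CNs * gagliardoSq N s u
    + (N : ℝ) / 2 * μ * (∫ x : RN N, (u x) ^ 2)
    - ((N : ℝ) + α) / 2 * Dnl N α f u

/-- The squared H^s norm, used to express continuity of paths in H^s. -/
def hsNormSq (N : ℕ) (s : ℝ) (u : RN N → ℝ) : ℝ :=
  (∫ x : RN N, (u x) ^ 2) + gagliardoSq N s u

/-- u is a critical point of J_μ on H^s_r: the Euler–Lagrange equation holds for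
all radial test functions in H^s. -/
def critPt (N : ℕ) (s CNs α μ : ℝ) (f : ℝ → ℝ) (u : RN N → ℝ) : Prop :=
  ∀ φ : RN N → ℝ, memHs N s φ → radialFn N φ →
    dForm N s CNs u φ + μ * ∫ x : RN N, u x * φ x =
      ∫ x : RN N, riesz N α (fun y => primitive f (u y)) x * f (u x) * φ x

/-- The set Γ_μ of admissible paths: continuous paths in H^s_r(ℝ^N) with γ(0)=0
and J_μ(γ(1)) < 0. -/
def pathSet (N : ℕ) (s CNs α μ : ℝ) (f : ℝ → ℝ) : Set (ℝ → RN N → ℝ) :=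
  { γ | (∀ t ∈ Set.Icc (0:ℝ) 1, memHs N s (γ t) ∧ radialFn N (γ t)) ∧
        (∀ t ∈ Set.Icc (0:ℝ) 1, ∀ ε > (0:ℝ), ∃ δ > (0:ℝ), ∀ t' ∈ Set.Icc (0:ℝ) 1,
            |t' - t| < δ → hsNormSq N s (fun x => γ t' x - γ t x) < ε) ∧
        γ 0 = 0 ∧ Jfun N s CNs α μ f (γ 1) < 0 }

/-- The Mountain Pass value l(μ). -/
def MPlevel (N : ℕ) (s CNs α μ : ℝ) (f : ℝ → ℝ) : ℝ :=
  sInf { c | ∃ γ ∈ pathSet N s CNs α μ f,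
      c = sSup ((fun t => Jfun N s CNs α μ f (γ t)) '' Set.Icc (0:ℝ) 1) }

/-- The Pohozaev least energy level p(μ). -/
def PohozaevLevel (N : ℕ) (s CNs α μ : ℝ) (f : ℝ → ℝ) : ℝ :=
  sInf { c | ∃ u : RN N → ℝ, memHs N s u ∧ radialFn N u ∧
      ¬ u =ᵐ[(volume : Measure (RN N))] 0 ∧
      Pfun N s CNs α μ f u = 0 ∧ c = Jfun N s CNs α μ f u }

/-- Membership in the sum space L^p(ℝ^N) + L^q(ℝ^N) (real exponents p,q). -/
def inSumLp (N : ℕ) (p q : ℝ) (H : RN N → ℝ) : Prop :=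
  ∃ H₁ H₂ : RN N → ℝ, MemLp H₁ (ENNReal.ofReal p) (volume : Measure (RN N)) ∧
    MemLp H₂ (ENNReal.ofReal q) (volume : Measure (RN N)) ∧ H = H₁ + H₂

/-- Truncation at level k. -/
def trunc (k t : ℝ) : ℝ := max (-k) (min t k)

open Real

lemma sinh_mul_le {μ u : ℝ} (hμ0 : 0 ≤ μ) (hμ1 : μ ≤ 1) (hu : 0 ≤ u) :
    Real.sinh (μ * u) ≤ μ * Real.sinh u := by
  have hmono : Monotone (fun x => μ * Real.sinh x - Real.sinh (μ * x)) := by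
    apply monotone_of_deriv_nonneg
    · exact (Real.differentiable_sinh.const_mul μ).sub
        (Real.differentiable_sinh.comp (differentiable_id.const_mul μ))
    · intro x
      have hin : HasDerivAt (fun y : ℝ => μ * y) μ x := by
        simpa using (hasDerivAt_id x).const_mul μ
      have hinner : HasDerivAt (fun y : ℝ => Real.sinh (μ * y))
          (Real.cosh (μ * x) * μ) x := (Real.hasDerivAt_sinh (μ * x)).comp x hin
      have h1 : HasDerivAt (fun x => μ * Real.sinh x - Real.sinh (μ * x))
          (μ * Real.cosh x - Real.cosh (μ * x) * μ) x :=
        ((Real.hasDerivAt_sinh x).const_mul μ).sub hinner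
      rw [h1.deriv]
      have h2 : Real.cosh (μ * x) ≤ Real.cosh x := by
        rw [Real.cosh_le_cosh, abs_mul]
        nlinarith [abs_nonneg x, abs_nonneg μ, abs_of_nonneg hμ0]
      nlinarith
  have := hmono hu
  simpa using this

lemma sinh_sq_sub (A B : ℝ) :
    Real.sinh (A + B) * Real.sinh (A - B) = Real.sinh A ^ 2 - Real.sinh B ^ 2 := by
  have hA := Real.cosh_sq A
  have hB := Real.cosh_sq B
  rw [Real.sinh_add, Real.sinh_sub]
  nlinarith [hA, hB]

lemma keySinh (r d : ℝ) (hr : 2 ≤ r) (hd : 0 ≤ d) :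
    4 * (r - 1) / r ^ 2 * Real.sinh (r / 2 * d) ^ 2 ≤
      Real.sinh d * Real.sinh ((r - 1) * d) := by
  have hr0 : (0:ℝ) < r := by linarith
  have hμ0 : 0 ≤ (r - 2) / r := div_nonneg (by linarith) hr0.le
  have hμ1 : (r - 2) / r ≤ 1 := by rw [div_le_one hr0]; linarith
  have hu0 : 0 ≤ r / 2 * d := by positivity
  have h1 : Real.sinh ((r - 2) / r * (r / 2 * d)) ≤ (r - 2) / r * Real.sinh (r / 2 * d) :=
    sinh_mul_le hμ0 hμ1 hu0
  have e1 : (r - 1) * d = r / 2 * d + (r - 2) / r * (r / 2 * d) := by field_simp; ring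
  have e2 : d = r / 2 * d - (r - 2) / r * (r / 2 * d) := by field_simp; ring
  have h2 := sinh_sq_sub (r / 2 * d) ((r - 2) / r * (r / 2 * d))
  have h3 : 0 ≤ Real.sinh ((r - 2) / r * (r / 2 * d)) :=
    Real.sinh_nonneg_iff.2 (mul_nonneg hμ0 hu0)
  have h4 : 0 ≤ Real.sinh (r / 2 * d) := Real.sinh_nonneg_iff.2 hu0
  have hc : 4 * (r - 1) / r ^ 2 = 1 - ((r - 2) / r) ^ 2 := by field_simp; ring
  rw [e1]
  nth_rewrite 2 [e2]
  rw [hc]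
  nlinarith [mul_le_mul h1 h1 h3 (mul_nonneg hμ0 h4), h2, sq_nonneg (Real.sinh (r/2*d))]

lemma keyPos (r : ℝ) (hr : 2 ≤ r) {α β : ℝ} (hβ : 0 ≤ β) (hαβ : β ≤ α) :
    4 * (r - 1) / r ^ 2 * (α ^ (r / 2) - β ^ (r / 2)) ^ 2 ≤
      (α - β) * (α ^ (r - 1) - β ^ (r - 1)) := by
  have hr0 : (0:ℝ) < r := by linarith
  have hc1 : 4 * (r - 1) / r ^ 2 ≤ 1 := by
    rw [div_le_one (by positivity)]; nlinarith
  rcases hβ.eq_or_lt with hβ0 | hβ0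
  · subst hβ0
    have hz1 : (0:ℝ) ^ (r / 2) = 0 := Real.zero_rpow (by positivity)
    have hz2 : (0:ℝ) ^ (r - 1) = 0 := Real.zero_rpow (by intro h; nlinarith [h])
    rw [hz1, hz2, sub_zero, sub_zero, sub_zero]
    rcases hαβ.eq_or_lt with hα0 | hα0
    · rw [← hα0, hz1, hz2]; simp
    · have h1 : (α ^ (r / 2)) ^ 2 = α ^ r := by
        rw [sq, ← Real.rpow_add hα0]; congr 1; ring
      have h2 : α * α ^ (r - 1) = α ^ r := by
        nth_rewrite 1 [← Real.rpow_one α]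
        rw [← Real.rpow_add hα0]; congr 1; ring
      rw [h1, h2]
      nlinarith [Real.rpow_nonneg hα0.le r]
  · -- 0 < β ≤ α
    have hα : (0:ℝ) < α := lt_of_lt_of_le hβ0 hαβ
    set p := Real.log α with hp
    set q := Real.log β with hq
    have hd : 0 ≤ (p - q) / 2 := by
      have := Real.log_le_log hβ0 hαβ
      linarith
    have expand : ∀ t : ℝ, α ^ t - β ^ t =
        2 * Real.exp (t * ((p + q) / 2)) * Real.sinh (t * ((p - q) / 2)) := by
      intro t
      rw [Real.rpow_def_of_pos hα, Real.rpow_def_of_pos hβ0, Real.sinh_eq, ← hp, ← hq]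
      have h1 : Real.exp (t * ((p+q)/2)) * Real.exp (t * ((p-q)/2)) = Real.exp (p * t) := by
        rw [← Real.exp_add]; congr 1; ring
      have h2 : Real.exp (t * ((p+q)/2)) * Real.exp (-(t * ((p-q)/2))) = Real.exp (q * t) := by
        rw [← Real.exp_add]; congr 1; ring
      linear_combination h2 - h1
    have e1 : α - β = 2 * Real.exp ((1:ℝ) * ((p + q) / 2)) * Real.sinh ((1:ℝ) * ((p - q) / 2)) := by
      have := expand 1; rwa [Real.rpow_one, Real.rpow_one] at this
    have e2 := expand (r - 1)
    have e3 := expand (r / 2)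
    rw [e1, e2, e3]
    have key := keySinh r ((p - q) / 2) hr hd
    have hsq : Real.exp (r / 2 * ((p + q) / 2)) ^ 2 = Real.exp (r * ((p + q) / 2)) := by
      rw [sq, ← Real.exp_add]; ring_nf
    have hmul : Real.exp ((1:ℝ) * ((p + q) / 2)) * Real.exp ((r - 1) * ((p + q) / 2)) =
        Real.exp (r * ((p + q) / 2)) := by
      rw [← Real.exp_add]; ring_nf
    have hep := Real.exp_pos (r * ((p + q) / 2))
    have key2 := mul_le_mul_of_nonneg_left key (le_of_lt hep)
    have hone : (1:ℝ) * ((p - q) / 2) = (p - q) / 2 := one_mul _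
    rw [hone]
    have g1 : 4 * (r - 1) / r ^ 2 *
        (2 * Real.exp (r / 2 * ((p + q) / 2)) * Real.sinh (r / 2 * ((p - q) / 2))) ^ 2 =
        4 * (Real.exp (r * ((p + q) / 2)) *
          (4 * (r - 1) / r ^ 2 * Real.sinh (r / 2 * ((p - q) / 2)) ^ 2)) := by
      rw [← hsq]; ring
    have g2 : 2 * Real.exp ((1:ℝ) * ((p + q) / 2)) * Real.sinh ((p - q) / 2) *
        (2 * Real.exp ((r - 1) * ((p + q) / 2)) * Real.sinh ((r - 1) * ((p - q) / 2))) =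
        4 * (Real.exp (r * ((p + q) / 2)) *
          (Real.sinh ((p - q) / 2) * Real.sinh ((r - 1) * ((p - q) / 2)))) := by
      rw [← hmul]; ring
    rw [g1, g2]
    linarith [key2]

lemma mulpow (r : ℝ) (hr : 2 ≤ r) {x : ℝ} (hx : 0 ≤ x) :
    x * x ^ (r - 2) = x ^ (r - 1) := by
  rcases hx.eq_or_lt with h | h
  · rw [← h, zero_mul]
    exact (Real.zero_rpow (by intro hc; nlinarith)).symm
  · nth_rewrite 1 [← Real.rpow_one x]
    rw [← Real.rpow_add h]; congr 1; ring

lemma sqpow (r : ℝ) (hr : 2 ≤ r) {x : ℝ} (hx : 0 ≤ x) :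
    (x ^ (r / 2)) ^ 2 = x ^ r := by
  rcases hx.eq_or_lt with h | h
  · rw [← h, Real.zero_rpow (by intro hc; nlinarith),
      Real.zero_rpow (by intro hc; nlinarith)]
    norm_num
  · rw [sq, ← Real.rpow_add h]; congr 1; ring

lemma selfmul (r : ℝ) (hr : 2 ≤ r) {x : ℝ} (hx : 0 ≤ x) :
    x * x ^ (r - 1) = x ^ r := by
  rcases hx.eq_or_lt with h | h
  · rw [← h, Real.zero_rpow (by intro hc; nlinarith),
      Real.zero_rpow (by intro hc; nlinarith)]
    norm_num
  · nth_rewrite 1 [← Real.rpow_one x]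
    rw [← Real.rpow_add h]; congr 1; ring

lemma keyAll (r : ℝ) (hr : 2 ≤ r) {α β : ℝ} (hαβ : β ≤ α) :
    4 * (r - 1) / r ^ 2 * (|α| ^ (r / 2) - |β| ^ (r / 2)) ^ 2 ≤
      (α - β) * (α * |α| ^ (r - 2) - β * |β| ^ (r - 2)) := by
  have hr0 : (0:ℝ) < r := by linarith
  have hc1 : 4 * (r - 1) / r ^ 2 ≤ 1 := by
    rw [div_le_one (by positivity)]; nlinarith
  rcases le_total 0 β with hβ | hβ
  · have hα : 0 ≤ α := le_trans hβ hαβ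
    rw [abs_of_nonneg hβ, abs_of_nonneg hα, mulpow r hr hα, mulpow r hr hβ]
    exact keyPos r hr hβ hαβ
  · rcases le_total α 0 with hα | hα
    · -- both nonpositive
      have H := keyPos r hr (β := -α) (α := -β) (by linarith) (by linarith)
      rw [abs_of_nonpos hα, abs_of_nonpos hβ]
      have m1 := mulpow r hr (x := -α) (by linarith)
      have m2 := mulpow r hr (x := -β) (by linarith)
      nlinarith [H, m1, m2]
    · -- β ≤ 0 ≤ α
      rw [abs_of_nonpos hβ, abs_of_nonneg hα]
      have m1 := mulpow r hr hα
      have m2 := mulpow r hr (x := -β) (by linarith)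
      have s1 := sqpow r hr hα
      have s2 := sqpow r hr (x := -β) (by linarith)
      have t1 := selfmul r hr hα
      have t2 := selfmul r hr (x := -β) (by linarith)
      have hX : 0 ≤ α ^ (r / 2) := Real.rpow_nonneg hα _
      have hY : 0 ≤ (-β) ^ (r / 2) := Real.rpow_nonneg (by linarith) _
      have hXr : 0 ≤ α ^ (r - 1) := Real.rpow_nonneg hα _
      have hYr : 0 ≤ (-β) ^ (r - 1) := Real.rpow_nonneg (by linarith) _
      have hab1 : α ≤ α - β := by linarith
      have hab2 : -β ≤ α - β := by linarith
      nlinarith [mul_le_mul_of_nonneg_right hab1 hXr,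
        mul_le_mul_of_nonneg_right hab2 hYr,
        mul_nonneg hX hY, sq_nonneg (α ^ (r / 2) - (-β) ^ (r / 2))]

lemma gmono (r : ℝ) (hr : 2 ≤ r) {x y : ℝ} (h : x ≤ y) :
    x * |x| ^ (r - 2) ≤ y * |y| ^ (r - 2) := by
  rcases h.eq_or_lt with rfl | hlt
  · exact le_refl _
  · have H := keyAll r hr hlt.le
    have hco : 0 ≤ 4 * (r - 1) / r ^ 2 := div_nonneg (by linarith) (by positivity)
    have h0 : 0 ≤ 4 * (r - 1) / r ^ 2 * (|y| ^ (r / 2) - |x| ^ (r / 2)) ^ 2 :=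
      mul_nonneg hco (sq_nonneg _)
    by_contra hc
    push_neg at hc
    nlinarith [H, h0]

lemma trunc_mono {k a b : ℝ} (h : b ≤ a) : trunc k b ≤ trunc k a :=
  max_le_max le_rfl (min_le_min h le_rfl)

lemma trunc_lip {k a b : ℝ} (h : b ≤ a) : trunc k a - trunc k b ≤ a - b := by
  unfold trunc
  simp only [max_def, min_def]
  split_ifs <;> linarith

lemma mainHalf (a b r k : ℝ) (hr : 2 ≤ r) (hab : b ≤ a) :
    4 * (r - 1) / r ^ 2 *
        (|trunc k a| ^ (r / 2) - |trunc k b| ^ (r / 2)) ^ 2 ≤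
      (a - b) *
        (trunc k a * |trunc k a| ^ (r - 2) - trunc k b * |trunc k b| ^ (r - 2)) := by
  have h1 : trunc k b ≤ trunc k a := trunc_mono hab
  have h2 : trunc k a - trunc k b ≤ a - b := trunc_lip hab
  have hg : trunc k b * |trunc k b| ^ (r - 2) ≤ trunc k a * |trunc k a| ^ (r - 2) :=
    gmono r hr h1
  have H := keyAll r hr h1
  nlinarith [H, mul_le_mul_of_nonneg_right h2 (by linarith :
    (0:ℝ) ≤ trunc k a * |trunc k a| ^ (r - 2) - trunc k b * |trunc k b| ^ (r - 2))]


/-- the elementary truncation inequality. -/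
theorem statement9 (a b r k : ℝ) (hr : 2 ≤ r) (hk : 0 ≤ k) :
    4 * (r - 1) / r ^ 2 *
        (|trunc k a| ^ (r / 2) - |trunc k b| ^ (r / 2)) ^ 2 ≤
      (a - b) *
        (trunc k a * |trunc k a| ^ (r - 2) - trunc k b * |trunc k b| ^ (r - 2)) := by
  rcases le_total b a with h | h
  · exact mainHalf a b r k hr h
  · have H := mainHalf b a r k hr h
    nlinarith [H]
end
end

section
/- Let N ≥ 2, s ∈ (0,1), a > 0 and Σ ⊂ ℝ^N a measurable set (possibly unbounded). Let u ∈ H^s(ℝ^N) be a weak subsolution of (−Δ)^s u + a u ≤ 0 in ℝ^N ∖ Σ, in the sense that E(u,φ) + a∫uφ ≤ 0 for every nonnegative φ ∈ H^s(ℝ^N) with support contained in ℝ^N ∖ Σ. If u ≤ 0 almost everywhere on Σ, then u ≤ 0 almost everywhere on ℝ^N. -/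
open MeasureTheory Filter Topology

noncomputable section

/-- maximum principle outside a set Σ. -/
theorem statement15
    (N : ℕ) (hN : 2 ≤ N) (s : ℝ) (hs : s ∈ Set.Ioo (0:ℝ) 1)
    (CNs : ℝ) (hCNs : 0 < CNs)
    (a : ℝ) (ha : 0 < a) (S : Set (RN N))
    (u : RN N → ℝ) (hu : memHs N s u)
    (hsub : ∀ φ : RN N → ℝ, memHs N s φ → (∀ x, 0 ≤ φ x) →
      Function.support φ ⊆ Sᶜ →
      dForm N s CNs u φ + a * ∫ x : RN N, u x * φ x ≤ 0)
    (hS : ∀ᵐ x ∂(volume : Measure (RN N)), x ∈ S → u x ≤ 0) :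
    ∀ᵐ x ∂(volume : Measure (RN N)), u x ≤ 0 := by
  classical
  obtain ⟨huL2, huG⟩ := hu
  set v : RN N → ℝ := fun x => max (u x) 0 with hvdef
  set φ : RN N → ℝ := fun x => if x ∈ S then 0 else v x with hpdef
  have hφv : φ =ᵐ[(volume : Measure (RN N))] v := by
    filter_upwards [hS] with x hx
    by_cases hxS : x ∈ S
    · simp only [hpdef, hvdef, if_pos hxS]
      exact (max_eq_right (hx hxS)).symm
    · simp [hpdef, hxS]
  have hvabs : ∀ x y : RN N, |v x - v y| ≤ |u x - u y| := fun x y =>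
    abs_max_sub_max_le_abs _ _ _
  have hvm : AEStronglyMeasurable v (volume : Measure (RN N)) :=
    (huL2.aestronglyMeasurable.aemeasurable.max aemeasurable_const).aestronglyMeasurable
  have hvL2 : MemLp v 2 (volume : Measure (RN N)) := by
    refine huL2.of_le hvm (Filter.Eventually.of_forall fun x => ?_)
    simp only [Real.norm_eq_abs, hvdef]
    rw [abs_of_nonneg (le_max_right _ _)]
    exact max_le (le_abs_self _) (abs_nonneg _)
  have hφL2 : MemLp φ 2 (volume : Measure (RN N)) := hvL2.ae_eq hφv.symm
  have key : ∀ a b : ℝ, 0 ≤ (a - b) * (max a 0 - max b 0) := by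
    intro a b
    rcases le_total a b with h | h
    · have h2 : max a 0 ≤ max b 0 := max_le_max h le_rfl
      nlinarith
    · have h2 : max b 0 ≤ max a 0 := max_le_max h le_rfl
      nlinarith
  -- Gagliardo integrability of φ
  have hfst : (φ ∘ Prod.fst) =ᵐ[(volume : Measure (RN N)).prod volume] (v ∘ Prod.fst) :=
    (Measure.quasiMeasurePreserving_fst (μ := (volume : Measure (RN N))) (ν := (volume : Measure (RN N)))).ae_eq_comp hφv
  have hsnd : (φ ∘ Prod.snd) =ᵐ[(volume : Measure (RN N)).prod volume] (v ∘ Prod.snd) :=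
    (Measure.quasiMeasurePreserving_snd (μ := (volume : Measure (RN N))) (ν := (volume : Measure (RN N)))).ae_eq_comp hφv
  have h1m : AEStronglyMeasurable (fun p : RN N × RN N => v p.1)
      ((volume : Measure (RN N)).prod volume) :=
    hvm.comp_quasiMeasurePreserving (Measure.quasiMeasurePreserving_fst (μ := (volume : Measure (RN N))) (ν := (volume : Measure (RN N))))
  have h2m : AEStronglyMeasurable (fun p : RN N × RN N => v p.2)
      ((volume : Measure (RN N)).prod volume) :=
    hvm.comp_quasiMeasurePreserving (Measure.quasiMeasurePreserving_snd (μ := (volume : Measure (RN N))) (ν := (volume : Measure (RN N))))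
  have hdm : AEStronglyMeasurable (fun p : RN N × RN N => dist p.1 p.2 ^ ((N : ℝ) + 2 * s))
      ((volume : Measure (RN N)).prod volume) :=
    (continuous_dist.rpow_const fun _ => Or.inr (add_nonneg (Nat.cast_nonneg N) (by linarith [hs.1]))).aestronglyMeasurable
  have hvG : Integrable (fun p : RN N × RN N =>
      (v p.1 - v p.2) ^ 2 / dist p.1 p.2 ^ ((N : ℝ) + 2 * s))
      ((volume : Measure (RN N)).prod volume) := by
    have hmeas : AEStronglyMeasurable (fun p : RN N × RN N =>
        (v p.1 - v p.2) ^ 2 / dist p.1 p.2 ^ ((N : ℝ) + 2 * s))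
        ((volume : Measure (RN N)).prod volume) := by
      exact (((h1m.aemeasurable.sub h2m.aemeasurable).pow_const 2).div
        hdm.aemeasurable).aestronglyMeasurable
    refine huG.mono hmeas (Filter.Eventually.of_forall fun p => ?_)
    have hsq : (v p.1 - v p.2) ^ 2 ≤ (u p.1 - u p.2) ^ 2 := by
      calc (v p.1 - v p.2) ^ 2 = |v p.1 - v p.2| ^ 2 := (sq_abs _).symm
        _ ≤ |u p.1 - u p.2| ^ 2 := pow_le_pow_left₀ (abs_nonneg _) (hvabs _ _) 2
        _ = (u p.1 - u p.2) ^ 2 := sq_abs _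
    have hd0 : (0:ℝ) ≤ dist p.1 p.2 ^ ((N : ℝ) + 2 * s) :=
      Real.rpow_nonneg dist_nonneg _
    rw [Real.norm_eq_abs, Real.norm_eq_abs, abs_div, abs_div,
      abs_of_nonneg (sq_nonneg (v p.1 - v p.2)), abs_of_nonneg (sq_nonneg (u p.1 - u p.2)),
      abs_of_nonneg hd0]
    exact div_le_div_of_nonneg_right hsq hd0
  have hφG : Integrable (fun p : RN N × RN N =>
      (φ p.1 - φ p.2) ^ 2 / dist p.1 p.2 ^ ((N : ℝ) + 2 * s))
      ((volume : Measure (RN N)).prod volume) := by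
    refine hvG.congr ?_
    filter_upwards [hfst, hsnd] with p h1 h2
    simp only [Function.comp] at h1 h2
    rw [h1, h2]
  have hφpos : ∀ x, 0 ≤ φ x := by
    intro x
    simp only [hpdef, hvdef]
    split
    · exact le_rfl
    · exact le_max_right _ _
  have hφsupp : Function.support φ ⊆ Sᶜ := by
    intro x hx
    simp only [Function.mem_support, hpdef] at hx
    intro hxS
    exact hx (if_pos hxS)
  have hle := hsub φ ⟨hφL2, hφG⟩ hφpos hφsupp
  have hd : 0 ≤ dForm N s CNs u φ := by
    unfold dForm
    apply mul_nonneg hCNs.le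
    apply integral_nonneg_of_ae
    filter_upwards [hφv] with x hx
    apply integral_nonneg_of_ae
    filter_upwards [hφv] with y hy
    rw [hx, hy, hvdef]
    exact div_nonneg (key _ _) (Real.rpow_nonneg dist_nonneg _)
  have hI : (∫ x : RN N, u x * φ x) = ∫ x : RN N, (v x) ^ 2 := by
    apply integral_congr_ae
    filter_upwards [hφv] with x hx
    rw [hx, hvdef]
    rcases le_total (u x) 0 with h | h
    · simp [max_eq_right h]
    · simp [max_eq_left h, sq]
  have hI0 : (∫ x : RN N, (v x) ^ 2) ≤ 0 := by
    rw [← hI]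
    nlinarith [hle, hd]
  have hv2int : Integrable (fun x => (v x) ^ 2) (volume : Measure (RN N)) :=
    hvL2.integrable_sq
  have hv2zero : (fun x => (v x) ^ 2) =ᵐ[(volume : Measure (RN N))] 0 := by
    have h0 : (∫ x : RN N, (v x) ^ 2) = 0 :=
      le_antisymm hI0 (integral_nonneg fun x => sq_nonneg _)
    exact (integral_eq_zero_iff_of_nonneg (fun x => sq_nonneg _) hv2int).mp h0
  filter_upwards [hv2zero] with x hx
  have hvx : v x = 0 := by
    have := hx
    simp only [Pi.zero_apply] at this
    nlinarith [sq_nonneg (v x)]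
  have : u x ≤ v x := by rw [hvdef]; exact le_max_left _ _
  rw [hvx] at this
  exact this
end
end
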